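/- Every cluster in any jammed configuration of fixed-length non-overlapping horizontal or vertical k-mers on the L × L torus (k ≤ L) is a wrapping (percolating) cluster: it contains a closed walk of nearest-neighbor steps whose net winding vector in Z² is nonzero. -/

import Mathlib

/-- A horizontal k-mer on the `L × L` torus with parent site `(x, y)`. -/
def hKmer (L k : ℕ) (x y : ZMod L) : Set (ZMod L × ZMod L) :=
  {s | ∃ j : ℕ, j < k ∧ s = (x + (j : ZMod L), y)}

/-- A vertical k-mer on the `L × L` torus with parent site `(x, y)`. -/
def vKmer (L k : ℕ) (x y : ZMod L) : Set (ZMod L × ZMod L) :=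
  {s | ∃ j : ℕ, j < k ∧ s = (x, y + (j : ZMod L))}

/-- A set of sites is a (horizontal or vertical) k-mer. -/
def IsKmer (L k : ℕ) (m : Set (ZMod L × ZMod L)) : Prop :=
  ∃ x y : ZMod L, m = hKmer L k x y ∨ m = vKmer L k x y

/-- A configuration: a family of pairwise disjoint k-mers. -/
def IsConfig (L k : ℕ) (C : Set (Set (ZMod L × ZMod L))) : Prop :=
  (∀ m ∈ C, IsKmer L k m) ∧ C.Pairwise Disjoint

/-- A jammed configuration: no further k-mer fits entirely on empty sites. -/
def IsJammed (L k : ℕ) (C : Set (Set (ZMod L × ZMod L))) : Prop :=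
  IsConfig L k C ∧ ∀ m, IsKmer L k m → ¬ Disjoint m (⋃₀ C)

/-- Toroidal nearest-neighbor adjacency. -/
def Adj (L : ℕ) (a b : ZMod L × ZMod L) : Prop :=
  b - a ∈ ({((1 : ZMod L), (0 : ZMod L)), (-1, 0), (0, 1), (0, -1)} :
    Set (ZMod L × ZMod L))

/-- `Cl` is a cluster (connected component) of the set `occ` of occupied sites. -/
def IsCluster (L : ℕ) (occ Cl : Set (ZMod L × ZMod L)) : Prop :=
  ∃ a ∈ occ, Cl =
    {b | b ∈ occ ∧ Relation.ReflTransGen (fun p q => p ∈ occ ∧ q ∈ occ ∧ Adj L p q) a b}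

/-- Reduction of an integer vector modulo `L` in both coordinates. -/
def castPair (L : ℕ) (v : ℤ × ℤ) : ZMod L × ZMod L := ((v.1 : ZMod L), (v.2 : ZMod L))

/-- Unit steps in `ℤ²`. -/
def IsUnitStep (v : ℤ × ℤ) : Prop := v = (1, 0) ∨ v = (-1, 0) ∨ v = (0, 1) ∨ v = (0, -1)

/-- `S` wraps around the torus: it contains a closed nearest-neighbor walk whose
net winding vector (sum of the `ℤ²` lifts of its steps) is nonzero. -/
def Wraps (L : ℕ) (S : Set (ZMod L × ZMod L)) : Prop :=
  ∃ (x : ZMod L × ZMod L) (n : ℕ) (d : Fin n → ℤ × ℤ),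
    (∀ i, IsUnitStep (d i)) ∧
    (∀ m : ℕ, m ≤ n → x + castPair L (∑ i : Fin n, if (i : ℕ) < m then d i else 0) ∈ S) ∧
    castPair L (∑ i, d i) = 0 ∧ (∑ i, d i) ≠ 0

/-- Every cluster in any jammed configuration of fixed-length non-overlapping
horizontal or vertical k-mers on the `L × L` torus (`k ≤ L`) is a wrapping
(percolating) cluster. -/
lemma castPair_add (L : ℕ) (u v : ℤ × ℤ) :
    castPair L (u + v) = castPair L u + castPair L v := by
  simp [castPair, Prod.ext_iff]
lemma castPair_zero (L : ℕ) : castPair L 0 = 0 := by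
  simp [castPair, Prod.ext_iff]
lemma castPair_sub (L : ℕ) (u v : ℤ × ℤ) :
    castPair L (u - v) = castPair L u - castPair L v := by
  simp [castPair, Prod.ext_iff]
lemma isUnitStep_neg {v : ℤ × ℤ} (h : IsUnitStep v) : IsUnitStep (-v) := by
  rcases h with rfl | rfl | rfl | rfl <;> simp [IsUnitStep, Prod.ext_iff]

/-- The cluster of `occ` rooted at `p₀`. -/
def clSet (L : ℕ) (occ : Set (ZMod L × ZMod L)) (p₀ : ZMod L × ZMod L) :
    Set (ZMod L × ZMod L) :=
  {b | b ∈ occ ∧ Relation.ReflTransGen (fun p q => p ∈ occ ∧ q ∈ occ ∧ Adj L p q) p₀ b}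

/-- Lift of the cluster to `ℤ²`: endpoints of lifted walks starting at `p₀`. -/
def Tset (L : ℕ) (occ : Set (ZMod L × ZMod L)) (p₀ : ZMod L × ZMod L) : Set (ℤ × ℤ) :=
  {v | ∃ l : List (ℤ × ℤ), (∀ s ∈ l, IsUnitStep s) ∧ l.sum = v ∧
    ∀ t : ℕ, p₀ + castPair L ((l.take t).sum) ∈ clSet L occ p₀}

lemma Tset_zero {L : ℕ} {occ} {p₀} (h : p₀ ∈ occ) : (0 : ℤ × ℤ) ∈ Tset L occ p₀ := by
  refine ⟨[], by simp, rfl, fun t => ?_⟩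
  simp [castPair_zero]
  exact ⟨h, Relation.ReflTransGen.refl⟩

lemma Tset_mem_cl {L : ℕ} {occ} {p₀} {v : ℤ × ℤ} (h : v ∈ Tset L occ p₀) :
    p₀ + castPair L v ∈ clSet L occ p₀ := by
  obtain ⟨l, _, hsum, hpre⟩ := h
  have := hpre l.length
  rwa [List.take_length, hsum] at this

lemma Tset_mem_occ {L : ℕ} {occ} {p₀} {v : ℤ × ℤ} (h : v ∈ Tset L occ p₀) :
    p₀ + castPair L v ∈ occ := (Tset_mem_cl h).1

lemma adj_of_unitStep (L : ℕ) (q : ZMod L × ZMod L) {e : ℤ × ℤ} (he : IsUnitStep e) :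
    Adj L q (q + castPair L e) := by
  have : q + castPair L e - q = castPair L e := by ring
  rw [Adj, this]
  rcases he with rfl | rfl | rfl | rfl <;> simp [castPair]

/-- Closure of the lifted cluster under occupied unit steps. -/
lemma Tset_extend {L : ℕ} {occ} {p₀} {v e : ℤ × ℤ} (hv : v ∈ Tset L occ p₀)
    (he : IsUnitStep e) (hocc : p₀ + castPair L (v + e) ∈ occ) :
    v + e ∈ Tset L occ p₀ := by
  obtain ⟨l, hu, hsum, hpre⟩ := hv
  have hvCl := Tset_mem_cl ⟨l, hu, hsum, hpre⟩
  refine ⟨l ++ [e], ?_, by simp [hsum], fun t => ?_⟩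
  · intro s hs
    rcases List.mem_append.1 hs with h | h
    · exact hu s h
    · simp at h; subst h; exact he
  · rcases le_or_gt t l.length with ht | ht
    · rw [List.take_append_of_le_length ht]; exact hpre t
    · rw [List.take_of_length_le (by simp; omega)]
      rw [List.sum_append, List.sum_singleton, hsum]
      refine ⟨hocc, hvCl.2.tail ⟨hvCl.1, hocc, ?_⟩⟩
      rw [castPair_add, ← add_assoc]
      exact adj_of_unitStep L _ he

/-- Partial sums via `Fin` indexing equal list prefix sums. -/
lemma sum_ite_take (l : List (ℤ × ℤ)) (m : ℕ) :
    (∑ i : Fin l.length, if (i : ℕ) < m then l.get i else 0) = (l.take m).sum := by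
  induction l generalizing m with
  | nil => simp
  | cons a l ih =>
    cases m with
    | zero => simp
    | succ m =>
      simp only [List.length_cons]
      rw [Fin.sum_univ_succ]
      simp only [Fin.val_zero, Fin.val_succ, List.get_cons_zero, List.get_cons_succ,
        Nat.zero_lt_succ, if_true, Nat.add_lt_add_iff_right]
      have h2 : ∀ x : Fin l.length, (a :: l).get x.succ = l.get x := fun x => rfl
      simp only [h2]
      rw [ih]
      simp [List.take_succ_cons]

/-- Reversal of a lifted walk. -/
lemma rev_walk {L : ℕ} {occ} {p₀} :
    ∀ (l : List (ℤ × ℤ)) (w : ℤ × ℤ), (∀ s ∈ l, IsUnitStep s) →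
    (∀ t : ℕ, p₀ + castPair L (w + (l.take t).sum) ∈ clSet L occ p₀) →
    ∃ l' : List (ℤ × ℤ), (∀ s ∈ l', IsUnitStep s) ∧ l'.sum = -l.sum ∧
      ∀ t : ℕ, p₀ + castPair L (w + l.sum + (l'.take t).sum) ∈ clSet L occ p₀ := by
  intro l
  induction l with
  | nil =>
    intro w _ hpre
    exact ⟨[], by simp, by simp, fun t => by simpa using hpre 0⟩
  | cons s rest ih =>
    intro w hu hpre
    obtain ⟨l'', hu'', hsum'', hpre''⟩ := ih (w + s)
      (fun x hx => hu x (List.mem_cons_of_mem _ hx))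
      (fun t => by
        have := hpre (t + 1)
        simpa [List.take_succ_cons, add_assoc] using this)
    refine ⟨l'' ++ [-s], ?_, by simp [hsum'']; try ring, fun t => ?_⟩
    · intro x hx
      rcases List.mem_append.1 hx with h | h
      · exact hu'' x h
      · simp at h; subst h
        exact isUnitStep_neg (hu s (List.mem_cons_self))
    · rcases le_or_gt t l''.length with ht | ht
      · rw [List.take_append_of_le_length ht]
        have := hpre'' t
        have he : w + (s :: rest).sum + (l''.take t).sum
            = w + s + rest.sum + (l''.take t).sum := by simp; ring
        rw [he]
        exact this
      · rw [List.take_of_length_le (by simp; omega)]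
        have he : w + (s :: rest).sum + (l'' ++ [-s]).sum = w := by
          simp [hsum'']; ring
        rw [he]
        simpa using hpre 0

lemma Tset_inj {L : ℕ} {occ} {p₀} (hn : ¬ Wraps L (clSet L occ p₀)) {u v : ℤ × ℤ}
    (hu : u ∈ Tset L occ p₀) (hv : v ∈ Tset L occ p₀)
    (h : castPair L u = castPair L v) : u = v := by
  by_contra hne
  obtain ⟨lu, huu, husum, hupre⟩ := hu
  obtain ⟨lv, hvu, hvsum, hvpre⟩ := hv
  obtain ⟨l', hu', hsum', hpre'⟩ := rev_walk lv 0 hvu (fun t => by simpa using hvpre t)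
  rw [hvsum] at hsum' hpre'
  set l := lu ++ l' with hl
  apply hn
  refine ⟨p₀, l.length, l.get, fun i => ?_, fun m _ => ?_, ?_, ?_⟩
  · have hmem : l.get i ∈ l := List.get_mem l i
    rcases List.mem_append.1 (show l.get i ∈ lu ++ l' from hmem) with hm | hm
    · exact huu _ hm
    · exact hu' _ hm
  · rw [sum_ite_take]
    rcases le_or_gt m lu.length with hm | hm
    · rw [List.take_append_of_le_length hm]
      exact hupre m
    · rw [List.take_append, List.take_of_length_le (le_of_lt hm),
        List.sum_append, husum]
      have hc : castPair L (u + (l'.take (m - lu.length)).sum)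
          = castPair L (0 + v + (l'.take (m - lu.length)).sum) := by
        rw [castPair_add, h, zero_add, castPair_add]
      rw [hc]
      exact hpre' (m - lu.length)
  · have htot : (∑ i, l.get i) = l.sum := by
      have := sum_ite_take l l.length
      rw [List.take_length] at this
      rw [← this]
      apply Finset.sum_congr rfl
      intro i _
      simp [i.isLt]
    rw [htot, hl, List.sum_append, husum, hsum']
    have : u + -v = u - v := by ring
    rw [this, castPair_sub, h, sub_self]
  · have htot : (∑ i, l.get i) = l.sum := by
      have := sum_ite_take l l.length
      rw [List.take_length] at this
      rw [← this]
      apply Finset.sum_congr rfl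
      intro i _
      simp [i.isLt]
    rw [htot, hl, List.sum_append, husum, hsum']
    intro hbad
    apply hne
    have hz : u - v = 0 := by rw [← hbad]; ring
    exact sub_eq_zero.mp hz

lemma Tset_finite {L : ℕ} {occ} {p₀} (hL : 0 < L)
    (hn : ¬ Wraps L (clSet L occ p₀)) : (Tset L occ p₀).Finite := by
  haveI : NeZero L := ⟨hL.ne'⟩
  apply Set.Finite.of_finite_image (f := castPair L) (Set.toFinite _)
  intro u hu v hv h
  exact Tset_inj hn hu hv h

lemma fpt_shift (L : ℕ) (p₀ : ZMod L × ZMod L) (w u : ℤ × ℤ) :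
    p₀ + castPair L (w + u) = (p₀ + castPair L w) + castPair L u := by
  rw [castPair_add, add_assoc]

/-- Jamming: a horizontal window of `k` lifted sites cannot be entirely empty. -/
lemma jam_h {L k : ℕ} {C : Set (Set (ZMod L × ZMod L))} (hC : IsJammed L k C)
    (p₀ : ZMod L × ZMod L) (ww : ℤ × ℤ)
    (h : ∀ j : ℤ, 0 ≤ j → j < k → p₀ + castPair L (ww + (j, 0)) ∉ ⋃₀ C) : False := by
  set q := p₀ + castPair L ww with hq
  apply hC.2 (hKmer L k q.1 q.2) ⟨q.1, q.2, Or.inl rfl⟩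
  rw [Set.disjoint_left]
  rintro s ⟨j, hj, rfl⟩
  have heq : (q.1 + (j : ZMod L), q.2) = p₀ + castPair L (ww + ((j : ℤ), (0 : ℤ))) := by
    rw [fpt_shift, ← hq]
    simp [castPair, Prod.ext_iff]
  rw [heq]
  exact h j (Int.natCast_nonneg j) (by exact_mod_cast hj)

/-- Jamming: a vertical window of `k` lifted sites cannot be entirely empty. -/
lemma jam_v {L k : ℕ} {C : Set (Set (ZMod L × ZMod L))} (hC : IsJammed L k C)
    (p₀ : ZMod L × ZMod L) (ww : ℤ × ℤ)
    (h : ∀ j : ℤ, 0 ≤ j → j < k → p₀ + castPair L (ww + (0, j)) ∉ ⋃₀ C) : False := by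
  set q := p₀ + castPair L ww with hq
  apply hC.2 (vKmer L k q.1 q.2) ⟨q.1, q.2, Or.inr rfl⟩
  rw [Set.disjoint_left]
  rintro s ⟨j, hj, rfl⟩
  have heq : (q.1, q.2 + (j : ZMod L)) = p₀ + castPair L (ww + ((0 : ℤ), (j : ℤ))) := by
    rw [fpt_shift, ← hq]
    simp [castPair, Prod.ext_iff]
  rw [heq]
  exact h j (Int.natCast_nonneg j) (by exact_mod_cast hj)

/-- At a "locally maximal" lifted cluster point, the k-mer through it lifts to a
straight segment ending at that point. -/
lemma mer_lift {L k : ℕ} {C : Set (Set (ZMod L × ZMod L))} {p₀ : ZMod L × ZMod L}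
    (hconf : ∀ m ∈ C, IsKmer L k m)
    {w : ℤ × ℤ} (hw : w ∈ Tset L (⋃₀ C) p₀)
    (hr : w + ((1:ℤ), (0:ℤ)) ∉ Tset L (⋃₀ C) p₀)
    (hup : w + ((0:ℤ), (1:ℤ)) ∉ Tset L (⋃₀ C) p₀) :
    (∃ m ∈ C, ∀ j : ℤ, 0 ≤ j → j < k →
        (w - (j, 0) ∈ Tset L (⋃₀ C) p₀ ∧ p₀ + castPair L (w - (j, 0)) ∈ m)) ∨
    (∃ m ∈ C, (∃ x y, m = vKmer L k x y) ∧ ∀ j : ℤ, 0 ≤ j → j < k →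
        (w - (0, j) ∈ Tset L (⋃₀ C) p₀ ∧ p₀ + castPair L (w - (0, j)) ∈ m)) := by
  obtain ⟨m, hm, hwm⟩ := Tset_mem_occ hw
  obtain ⟨x, y, hxy | hxy⟩ := hconf m hm
  · -- horizontal k-mer
    left
    obtain ⟨j0, hj0k, hfw⟩ : ∃ j0 : ℕ, j0 < k ∧ p₀ + castPair L w = (x + (j0 : ZMod L), y) := by
      rw [hxy] at hwm; exact hwm
    by_cases hj0 : j0 + 1 < k
    · exfalso
      apply hr
      apply Tset_extend hw (Or.inl rfl)
      have : p₀ + castPair L (w + ((1:ℤ), (0:ℤ))) = (x + ((j0 + 1 : ℕ) : ZMod L), y) := by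
        rw [fpt_shift, hfw]
        simp [castPair, Prod.ext_iff]
        push_cast
        ring
      rw [this]
      exact ⟨m, hm, by rw [hxy]; exact ⟨j0 + 1, hj0, rfl⟩⟩
    · have hj0e : j0 = k - 1 := by omega
      subst hj0e
      refine ⟨m, hm, ?_⟩
      have key : ∀ jn : ℕ, jn < k →
          (w - ((jn : ℤ), 0) ∈ Tset L (⋃₀ C) p₀ ∧
            p₀ + castPair L (w - ((jn : ℤ), 0)) ∈ m) := by
        intro jn
        induction jn with
        | zero =>
          intro _
          have hz : w - (((0:ℕ):ℤ), (0:ℤ)) = w := by simp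
          rw [hz]
          exact ⟨hw, hwm⟩
        | succ n ih =>
          intro hlt
          obtain ⟨hT, _⟩ := ih (by omega)
          have hmem : p₀ + castPair L (w - (((n+1 : ℕ) : ℤ), 0)) ∈ m := by
            have : p₀ + castPair L (w - (((n+1 : ℕ) : ℤ), 0))
                = (x + ((k - 1 - (n+1) : ℕ) : ZMod L), y) := by
              have hsub : w - (((n+1 : ℕ) : ℤ), 0) = w + (-((n+1 : ℕ) : ℤ), 0) := by
                simp [Prod.ext_iff]; ring
              rw [hsub, fpt_shift, hfw]
              simp [castPair, Prod.ext_iff]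
              rw [Nat.cast_sub (by omega : n + 1 ≤ k - 1)]
              push_cast
              ring
            rw [this, hxy]
            exact ⟨k - 1 - (n+1), by omega, rfl⟩
          have hstep : w - (((n+1 : ℕ) : ℤ), 0) = (w - (((n : ℕ) : ℤ), (0:ℤ))) + (-1, 0) := by
            simp [Prod.ext_iff]; push_cast; ring
          rw [hstep]
          refine ⟨Tset_extend hT (Or.inr (Or.inl rfl)) ?_, by rw [← hstep]; exact hmem⟩
          rw [← hstep]
          exact ⟨m, hm, hmem⟩
      intro j hj0' hjk
      have := key j.toNat (by omega)
      have hco : ((j.toNat : ℤ), (0:ℤ)) = ((j : ℤ), (0:ℤ)) := by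
        simp [Int.toNat_of_nonneg hj0']
      rw [hco] at this
      exact this
  · -- vertical k-mer
    right
    obtain ⟨j0, hj0k, hfw⟩ : ∃ j0 : ℕ, j0 < k ∧ p₀ + castPair L w = (x, y + (j0 : ZMod L)) := by
      rw [hxy] at hwm; exact hwm
    by_cases hj0 : j0 + 1 < k
    · exfalso
      apply hup
      apply Tset_extend hw (Or.inr (Or.inr (Or.inl rfl)))
      have : p₀ + castPair L (w + ((0:ℤ), (1:ℤ))) = (x, y + ((j0 + 1 : ℕ) : ZMod L)) := by
        rw [fpt_shift, hfw]
        simp [castPair, Prod.ext_iff]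
        push_cast
        ring
      rw [this]
      exact ⟨m, hm, by rw [hxy]; exact ⟨j0 + 1, hj0, rfl⟩⟩
    · have hj0e : j0 = k - 1 := by omega
      subst hj0e
      refine ⟨m, hm, ⟨x, y, hxy⟩, ?_⟩
      have key : ∀ jn : ℕ, jn < k →
          (w - ((0:ℤ), (jn : ℤ)) ∈ Tset L (⋃₀ C) p₀ ∧
            p₀ + castPair L (w - ((0:ℤ), (jn : ℤ))) ∈ m) := by
        intro jn
        induction jn with
        | zero =>
          intro _
          have hz : w - ((0:ℤ), ((0:ℕ):ℤ)) = w := by simp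
          rw [hz]
          exact ⟨hw, hwm⟩
        | succ n ih =>
          intro hlt
          obtain ⟨hT, _⟩ := ih (by omega)
          have hmem : p₀ + castPair L (w - ((0:ℤ), ((n+1 : ℕ) : ℤ))) ∈ m := by
            have : p₀ + castPair L (w - ((0:ℤ), ((n+1 : ℕ) : ℤ)))
                = (x, y + ((k - 1 - (n+1) : ℕ) : ZMod L)) := by
              have hsub : w - ((0:ℤ), ((n+1 : ℕ) : ℤ)) = w + ((0:ℤ), -((n+1 : ℕ) : ℤ)) := by
                simp [Prod.ext_iff]; ring
              rw [hsub, fpt_shift, hfw]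
              simp [castPair, Prod.ext_iff]
              rw [Nat.cast_sub (by omega : n + 1 ≤ k - 1)]
              push_cast
              ring
            rw [this, hxy]
            exact ⟨k - 1 - (n+1), by omega, rfl⟩
          have hstep : w - ((0:ℤ), ((n+1 : ℕ) : ℤ)) = (w - ((0:ℤ), ((n : ℕ) : ℤ))) + (0, -1) := by
            simp [Prod.ext_iff]; push_cast; ring
          rw [hstep]
          refine ⟨Tset_extend hT (Or.inr (Or.inr (Or.inr rfl))) ?_, by rw [← hstep]; exact hmem⟩
          rw [← hstep]
          exact ⟨m, hm, hmem⟩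
      intro j hj0' hjk
      have := key j.toNat (by omega)
      have hco : ((0:ℤ), ((j.toNat : ℕ) : ℤ)) = ((0:ℤ), (j : ℤ)) := by
        simp [Int.toNat_of_nonneg hj0']
      rw [hco] at this
      exact this

lemma exists_dominator {T : Set (ℤ × ℤ)} (hfin : T.Finite) {v : ℤ × ℤ} (hv : v ∈ T) :
    ∃ w ∈ T, v ≤ w ∧ ∀ u ∈ T, w ≤ u → u = w := by
  have hSfin : {u ∈ T | v ≤ u}.Finite := hfin.subset (fun u hu => hu.1)
  obtain ⟨w, hwS, hmax⟩ := Set.Finite.exists_maximalFor (fun u : ℤ × ℤ => u.1 + u.2)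
    {u ∈ T | v ≤ u} hSfin ⟨v, hv, le_refl v⟩
  refine ⟨w, hwS.1, hwS.2, fun u hu hle => ?_⟩
  obtain ⟨h1, h2⟩ := Prod.le_def.mp hle
  have hsum := @hmax u ⟨hu, le_trans hwS.2 hle⟩ (add_le_add h1 h2)
  simp only at hsum
  exact Prod.ext (by omega) (by omega)

theorem jammed_cluster_wraps' (L k : ℕ) (hL : 0 < L) (hk : 0 < k) (hkL : k ≤ L)
    (C : Set (Set (ZMod L × ZMod L))) (hC : IsJammed L k C)
    (Cl : Set (ZMod L × ZMod L)) (hCl : IsCluster L (⋃₀ C) Cl) :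
    Wraps L Cl := by
  obtain ⟨p₀, hp₀occ, hClq⟩ := hCl
  subst hClq
  by_contra hn
  have hn' : ¬ Wraps L (clSet L (⋃₀ C) p₀) := hn
  have hkmers : ∀ m ∈ C, IsKmer L k m := hC.1.1
  have hdisj : C.Pairwise Disjoint := hC.1.2
  set T := Tset L (⋃₀ C) p₀ with hT
  have hT0 : (0 : ℤ × ℤ) ∈ T := Tset_zero hp₀occ
  have hTfin : T.Finite := Tset_finite hL hn'
  have dom : ∀ v ∈ T, ∃ w ∈ T, v ≤ w ∧ ∀ u ∈ T, w ≤ u → u = w :=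
    fun v hv => exists_dominator hTfin hv
  -- the set of pointwise-maximal elements of T carrying a horizontal k-mer segment
  set E : Set (ℤ × ℤ) := {w | ((w ∈ T ∧ ∀ u ∈ T, w ≤ u → u = w) ∧
    ∃ m ∈ C, ∀ j : ℤ, 0 ≤ j → j < k →
      (w - (j, 0) ∈ T ∧ p₀ + castPair L (w - (j, 0)) ∈ m))} with hE
  -- E is nonempty: take a maximal point of maximal first coordinate
  have hEne : E.Nonempty := by
    obtain ⟨v₀, hv₀T, hv₀max⟩ := Set.Finite.exists_maximalFor Prod.fst T hTfin ⟨0, hT0⟩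
    have hxmax : ∀ u ∈ T, u.1 ≤ v₀.1 :=
      fun u hu => le_of_not_gt (fun hlt => by have := @hv₀max u hu (le_of_lt hlt); omega)
    obtain ⟨w, hwT, hvw, hwmax⟩ := dom v₀ hv₀T
    have hxw : ∀ u ∈ T, u.1 ≤ w.1 := fun u hu => le_trans (hxmax u hu) hvw.1
    have hr : w + ((1:ℤ), (0:ℤ)) ∉ T := by
      intro hmem
      have := hxw _ hmem
      simp at this
    have hup : w + ((0:ℤ), (1:ℤ)) ∉ T := by
      intro hmem
      have := hwmax _ hmem ⟨by simp, by simp⟩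
      rw [Prod.ext_iff] at this
      simp at this
    rcases mer_lift hkmers hwT hr hup with hHB | ⟨m, hmC, _, hseg⟩
    · exact ⟨w, ⟨hwT, hwmax⟩, hHB⟩
    · exfalso
      apply jam_v hC p₀ (w + (1, -((k:ℤ) - 1)))
      intro j hj0 hjk hocc
      have hpt : w + ((1:ℤ), -((k:ℤ) - 1)) + ((0:ℤ), j)
          = (w - ((0:ℤ), (k:ℤ) - 1 - j)) + ((1:ℤ), (0:ℤ)) := by
        simp [Prod.ext_iff]; ring
      rw [hpt] at hocc
      have hTi := (hseg ((k:ℤ) - 1 - j) (by omega) (by omega)).1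
      have := Tset_extend hTi (Or.inl rfl) hocc
      have := hxw _ this
      simp at this
  -- pick the element of E with maximal second coordinate
  have hEfin : E.Finite := hTfin.subset (fun w hw => hw.1.1)
  obtain ⟨wH, hwHE, hwHmaxsnd⟩ := Set.Finite.exists_maximalFor Prod.snd E hEfin hEne
  have hEmax : ∀ w ∈ E, w.2 ≤ wH.2 :=
    fun w hw => le_of_not_gt (fun hlt => by have := @hwHmaxsnd w hw (le_of_lt hlt); omega)
  obtain ⟨⟨hwHT, hwHmax⟩, mH, hmHC, hsegH⟩ := hwHE
  -- the window above the horizontal segment of wH contains a cluster point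
  have hwin1 : ∃ j₁ : ℤ, 0 ≤ j₁ ∧ j₁ < k ∧ (wH - (j₁, 0) + ((0:ℤ), (1:ℤ))) ∈ T := by
    by_contra hcon
    push_neg at hcon
    apply jam_h hC p₀ (wH + ((1:ℤ) - k, (1:ℤ)))
    intro j hj0 hjk hocc
    have hpt : wH + ((1:ℤ) - k, (1:ℤ)) + (j, (0:ℤ))
        = (wH - ((k:ℤ) - 1 - j, 0)) + ((0:ℤ), (1:ℤ)) := by
      simp [Prod.ext_iff]; ring
    rw [hpt] at hocc
    have hTi := (hsegH ((k:ℤ) - 1 - j) (by omega) (by omega)).1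
    have hmem := Tset_extend hTi (Or.inr (Or.inr (Or.inl rfl))) hocc
    exact hcon _ (by omega) (by omega) hmem
  obtain ⟨j₁, hj₁0, hj₁k, hzT⟩ := hwin1
  -- the set of maximal points strictly above wH
  set D : Set (ℤ × ℤ) := {w | (w ∈ T ∧ ∀ u ∈ T, w ≤ u → u = w) ∧ wH.2 < w.2} with hD
  have hDne : D.Nonempty := by
    obtain ⟨w', hw'T, hzle, hw'max⟩ := dom _ hzT
    refine ⟨w', ⟨hw'T, hw'max⟩, lt_of_lt_of_le ?_ hzle.2⟩
    simp
  have hDfin : D.Finite := hTfin.subset (fun w hw => hw.1.1)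
  obtain ⟨wV, hwVD, hwVmaxfst⟩ := Set.Finite.exists_maximalFor Prod.fst D hDfin hDne
  have hDmax : ∀ w ∈ D, w.1 ≤ wV.1 :=
    fun w hw => le_of_not_gt (fun hlt => by have := @hwVmaxfst w hw (le_of_lt hlt); omega)
  obtain ⟨⟨hwVT, hwVmax⟩, hb⟩ := hwVD
  -- every cluster point strictly above wH lies weakly left of wV
  have hup_bound : ∀ u ∈ T, wH.2 < u.2 → u.1 ≤ wV.1 := by
    intro u hu hu2
    obtain ⟨w', hw'T, hule, hw'max⟩ := dom u hu
    exact le_trans hule.1 (hDmax w' ⟨⟨hw'T, hw'max⟩, lt_of_lt_of_le hu2 hule.2⟩)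
  -- wV.1 ≥ wH.1 - j₁
  have hstep10 : wH.1 - j₁ ≤ wV.1 := by
    have := hup_bound _ hzT (by simp)
    simpa using this
  -- wV is not in E
  have hwVnE : wV ∉ E := fun hmem => absurd (hEmax wV hmem) (not_le.mpr hb)
  -- apply mer_lift at wV; must be the vertical case
  have hrV : wV + ((1:ℤ), (0:ℤ)) ∉ T := by
    intro hmem
    have := hwVmax _ hmem ⟨by simp, by simp⟩
    rw [Prod.ext_iff] at this
    simp at this
  have hupV : wV + ((0:ℤ), (1:ℤ)) ∉ T := by
    intro hmem
    have := hwVmax _ hmem ⟨by simp, by simp⟩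
    rw [Prod.ext_iff] at this
    simp at this
  rcases mer_lift hkmers hwVT hrV hupV with hHB | ⟨mV, hmVC, ⟨xv, yv, hxyv⟩, hsegV⟩
  · exact hwVnE ⟨⟨hwVT, hwVmax⟩, hHB⟩
  -- the window right of the vertical segment of wV contains a cluster point
  have hwin2 : ∃ j₂ : ℤ, 0 ≤ j₂ ∧ j₂ < k ∧ (wV - ((0:ℤ), j₂) + ((1:ℤ), (0:ℤ))) ∈ T := by
    by_contra hcon
    push_neg at hcon
    apply jam_v hC p₀ (wV + ((1:ℤ), (1:ℤ) - k))
    intro j hj0 hjk hocc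
    have hpt : wV + ((1:ℤ), (1:ℤ) - k) + ((0:ℤ), j)
        = (wV - ((0:ℤ), (k:ℤ) - 1 - j)) + ((1:ℤ), (0:ℤ)) := by
      simp [Prod.ext_iff]; ring
    rw [hpt] at hocc
    have hTi := (hsegV ((k:ℤ) - 1 - j) (by omega) (by omega)).1
    have hmem := Tset_extend hTi (Or.inl rfl) hocc
    exact hcon _ (by omega) (by omega) hmem
  obtain ⟨j₂, hj₂0, hj₂k, hz₂T⟩ := hwin2
  -- that point is right of wV, hence not above wH
  have hstep14 : wV.2 - j₂ ≤ wH.2 := by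
    by_contra hgt
    push_neg at hgt
    have := hup_bound _ hz₂T (by simpa using hgt)
    simp at this
  -- wV is strictly left of wH
  have hstep15 : wV.1 < wH.1 := by
    by_contra hge
    push_neg at hge
    have := hwHmax wV hwVT ⟨hge, le_of_lt hb⟩
    rw [this] at hb
    exact lt_irrefl _ hb
  set d : ℤ := wH.1 - wV.1 with hdd
  set d' : ℤ := wV.2 - wH.2 with hdd'
  have hd1 : 1 ≤ d := by omega
  have hdk : d < k := by omega
  have hd'1 : 1 ≤ d' := by omega
  have hd'k : d' < k := by omega
  -- the common point (wV.1, wH.2)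
  have hq1 : wH - (d, 0) = (wV.1, wH.2) := by simp [Prod.ext_iff, hdd]
  have hq2 : wV - ((0:ℤ), d') = (wV.1, wH.2) := by simp [Prod.ext_iff, hdd']
  have hqmH : p₀ + castPair L ((wV.1, wH.2) : ℤ × ℤ) ∈ mH := by
    have := (hsegH d (by omega) (by omega)).2
    rwa [hq1] at this
  have hqmV : p₀ + castPair L ((wV.1, wH.2) : ℤ × ℤ) ∈ mV := by
    have := (hsegV d' (by omega) (by omega)).2
    rwa [hq2] at this
  have hmHV : mH = mV := by
    by_contra hne
    exact (Set.disjoint_left.mp (hdisj hmHC hmVC hne)) hqmH hqmV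
  -- wH itself is in mH = mV, a vertical k-mer: first coordinates must agree
  have hwHm : p₀ + castPair L wH ∈ mV := by
    have := (hsegH 0 (le_refl 0) (by omega)).2
    rw [hmHV] at this
    simpa [show wH - ((0:ℤ), (0:ℤ)) = wH from by ext <;> simp] using this
  rw [hxyv] at hwHm hqmV
  obtain ⟨ja, _, hja⟩ := hwHm
  obtain ⟨jb, _, hjb⟩ := hqmV
  have hfst : p₀.1 + ((wH.1 : ZMod L)) = p₀.1 + ((wV.1 : ZMod L)) := by
    have h1 : (p₀ + castPair L wH).1 = xv := by rw [hja]
    have h2 : (p₀ + castPair L ((wV.1, wH.2) : ℤ × ℤ)).1 = xv := by rw [hjb]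
    rw [← h2] at h1
    simpa [castPair] using h1
  have hzero : ((d : ℤ) : ZMod L) = 0 := by
    have : ((wH.1 : ZMod L)) = ((wV.1 : ZMod L)) := by
      have := hfst
      exact add_left_cancel this
    rw [hdd]
    push_cast
    rw [this]
    ring
  have hdvd : (L : ℤ) ∣ d := (ZMod.intCast_zmod_eq_zero_iff_dvd d L).mp hzero
  have hLd : (L : ℤ) ≤ d := Int.le_of_dvd (by omega) hdvd
  omega

theorem jammed_cluster_wraps (L k : ℕ) (hL : 0 < L) (hk : 0 < k) (hkL : k ≤ L)
    (C : Set (Set (ZMod L × ZMod L))) (hC : IsJammed L k C)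
    (Cl : Set (ZMod L × ZMod L)) (hCl : IsCluster L (⋃₀ C) Cl) :
    Wraps L Cl := by
  exact jammed_cluster_wraps' L k hL hk hkL C hC Cl hCl
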